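/- Let L be a one-dimensional local field with finite residue field F_q, μ a nonzero Haar measure on L, u a uniformizer. The map j : D(L)_{O_L^*} → D_+(Z), sending the class of g to the function n ↦ (1/μ(O_L^*(n))) ∫_{O_L^*(n)} g dμ (with O_L^*(n) = m_L^n \ m_L^{n+1}), is a well-defined isomorphism of C-vector spaces which does not depend on the choice of μ. -/

import Mathlib

open Multiplicative MeasureTheory

local notation "ℤₘ₀" => WithZero (Multiplicative ℤ)
open scoped ENNReal NNReal
set_option linter.unusedSectionVars false
set_option maxHeartbeats 1000000

/-- The set `D_+(ℤ)` of complex-valued functions on `ℤ` which vanish below some `x₀`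
and are constant above some `x₁`. -/
def DplusSet : Set (ℤ → ℂ) :=
  {c | (∃ x0 : ℤ, ∀ y ≤ x0, c y = 0) ∧ (∃ x1 : ℤ, ∀ x, x1 ≤ x → c (x + 1) = c x)}

/-- `D(L)`: locally constant compactly supported `ℂ`-valued functions on a discretely
valued field `L`, described algebraically. -/
def DL (L : Type*) [Field L] [Valued L ℤₘ₀] : Set (L → ℂ) :=
  {f | (∃ n : ℤ, ∀ x : L, f x ≠ 0 → Valued.v x ≤ ((ofAdd n : Multiplicative ℤ) : ℤₘ₀)) ∧
    ∃ m : ℤ, ∀ x y : L, Valued.v (x - y) ≤ ((ofAdd m : Multiplicative ℤ) : ℤₘ₀) → f x = f y}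

/-- The "annulus" `O_L^*(n) = m_L^n \ m_L^{n+1} = {x : v(x) = ofAdd(−n)}`. -/
def annulus (L : Type*) [Field L] [Valued L ℤₘ₀] (n : ℤ) : Set L :=
  {x : L | Valued.v x = ((ofAdd (-n) : Multiplicative ℤ) : ℤₘ₀)}

/-- The map `j` computed from a Haar measure `μ`:
`j(g)(n) = (1/μ(O_L^*(n))) ∫_{O_L^*(n)} g dμ`. -/
noncomputable def jmap (L : Type*) [Field L] [Valued L ℤₘ₀] [MeasurableSpace L]
    (μ : Measure L) (g : L → ℂ) (n : ℤ) : ℂ :=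
  ((μ (annulus L n)).toReal)⁻¹ • ∫ x in annulus L n, g x ∂μ

/-! ### Auxiliary material -/

noncomputable def oA (n : ℤ) : ℤₘ₀ := ((ofAdd n : Multiplicative ℤ) : ℤₘ₀)

lemma oA_ne_zero (n : ℤ) : oA n ≠ 0 := WithZero.coe_ne_zero
lemma oA_pos (n : ℤ) : (0:ℤₘ₀) < oA n := zero_lt_iff.mpr (oA_ne_zero n)
lemma oA_le_oA {a b : ℤ} : oA a ≤ oA b ↔ a ≤ b := by
  simp [oA, WithZero.coe_le_coe, Multiplicative.ofAdd_le]
lemma oA_lt_oA {a b : ℤ} : oA a < oA b ↔ a < b := by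
  simp [oA, WithZero.coe_lt_coe, Multiplicative.ofAdd_lt]
lemma oA_mul (a b : ℤ) : oA a * oA b = oA (a + b) := by
  simp [oA, ← WithZero.coe_mul, ← ofAdd_add]
lemma oA_zero : oA 0 = 1 := rfl
lemma lt_oA_iff {x : ℤₘ₀} {k : ℤ} : x < oA k ↔ x ≤ oA (k - 1) := by
  rcases eq_or_ne x 0 with rfl | hx
  · simp [oA_pos, zero_le']
  · lift x to Multiplicative ℤ using hx
    rw [oA, oA, WithZero.coe_lt_coe, WithZero.coe_le_coe, ← Multiplicative.toAdd_lt,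
      ← Multiplicative.toAdd_le, toAdd_ofAdd, toAdd_ofAdd]
    omega
lemma max_oA (a b : ℤ) : max (oA a) (oA b) = oA (max a b) := by
  rcases le_total a b with h | h
  · rw [max_eq_right (oA_le_oA.mpr h), max_eq_right h]
  · rw [max_eq_left (oA_le_oA.mpr h), max_eq_left h]

section Field
variable {L : Type*} [Field L] [Valued L ℤₘ₀]

lemma v_zero_iff {x : L} : Valued.v x = 0 ↔ x = 0 := Valuation.zero_iff _
lemma v_ne_zero_iff {x : L} : Valued.v x ≠ 0 ↔ x ≠ 0 := Valuation.ne_zero_iff _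

noncomputable def valInt (x : L) : ℤ :=
  if h : Valued.v x = 0 then 0 else -Multiplicative.toAdd (WithZero.unzero h)

lemma valInt_eq {x : L} {k : ℤ} (h : Valued.v x = oA k) : valInt x = -k := by
  have hx : Valued.v x ≠ 0 := h ▸ oA_ne_zero k
  have h2 : WithZero.unzero hx = ofAdd k := by
    apply WithZero.coe_inj.mp
    rw [WithZero.coe_unzero, h]; rfl
  rw [valInt, dif_neg hx, h2, toAdd_ofAdd]

lemma v_exists {x : L} (hx : x ≠ 0) : ∃ k : ℤ, Valued.v x = oA k := by
  have h : Valued.v x ≠ 0 := v_ne_zero_iff.mpr hx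
  exact ⟨toAdd (WithZero.unzero h), by rw [oA, ofAdd_toAdd, WithZero.coe_unzero]⟩

lemma v_eq_oA {x : L} (hx : x ≠ 0) : Valued.v x = oA (-valInt x) := by
  obtain ⟨k, hk⟩ := v_exists hx
  have := valInt_eq hk
  rw [hk]; congr 1; omega

lemma mem_annulus {x : L} {n : ℤ} : x ∈ annulus L n ↔ Valued.v x = oA (-n) := Iff.rfl

lemma annulus_ne_zero {x : L} {n : ℤ} (h : x ∈ annulus L n) : x ≠ 0 :=
  v_ne_zero_iff.mp (by rw [mem_annulus.mp h]; exact oA_ne_zero _)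

lemma valInt_annulus {x : L} {n : ℤ} (h : x ∈ annulus L n) : valInt x = n := by
  have := valInt_eq (mem_annulus.mp h); omega

/-- ultrametric: if `v (x - y) < v x` then `v y = v x`. -/
lemma v_eq_of_sub_lt {x y : L} (h : Valued.v (x - y) < Valued.v x) :
    Valued.v y = Valued.v x := by
  have : Valued.v (x - (x - y)) = Valued.v x := Valuation.map_sub_eq_of_lt_left _ h
  simpa using this

lemma v_sub_le {x y : L} : Valued.v (x - y) ≤ max (Valued.v x) (Valued.v y) :=
  Valuation.map_sub _ _ _

def cball (L : Type*) [Field L] [Valued L ℤₘ₀] (j : ℤ) : Set L := {x | Valued.v x ≤ oA j}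
def tball (a : L) (m : ℤ) : Set L := {x | Valued.v (x - a) ≤ oA m}

lemma mem_tball {x a : L} {m : ℤ} : x ∈ tball a m ↔ Valued.v (x - a) ≤ oA m := Iff.rfl

lemma mem_tball_self (a : L) (m : ℤ) : a ∈ tball a m := by
  show Valued.v (a - a) ≤ oA m
  rw [sub_self, map_zero]
  exact zero_le'

lemma tball_eq_of_mem {a b : L} {m : ℤ} (h : b ∈ tball a m) : tball a m = tball b m := by
  ext x
  constructor <;> intro hx
  · have : Valued.v (x - b) ≤ oA m := by
      have := v_sub_le (x := x - a) (y := b - a)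
      simp only [sub_sub_sub_cancel_right] at this
      exact this.trans (max_le hx h)
    exact this
  · have : Valued.v (x - a) ≤ oA m := by
      have := v_sub_le (x := x - b) (y := a - b)
      have h2 : Valued.v (a - b) ≤ oA m := by rwa [Valuation.map_sub_swap]
      simp only [sub_sub_sub_cancel_right] at this
      exact this.trans (max_le hx h2)
    exact this

lemma mem_tball_congr {x y a : L} {m : ℤ} (h : Valued.v (x - y) ≤ oA m) :
    x ∈ tball a m ↔ y ∈ tball a m := by
  constructor <;> intro hx
  · rw [tball_eq_of_mem hx]
    show Valued.v (y - x) ≤ oA m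
    rwa [Valuation.map_sub_swap]
  · rw [tball_eq_of_mem hx]
    exact h

lemma tball_subset_annulus {a : L} {n m : ℤ} (ha : a ∈ annulus L n) (hm : m < -n) :
    tball a m ⊆ annulus L n := by
  intro x hx
  have hva : Valued.v a = oA (-n) := mem_annulus.mp ha
  have : Valued.v (a - x) < Valued.v a := by
    rw [Valuation.map_sub_swap, hva]
    exact lt_of_le_of_lt hx (oA_lt_oA.mpr hm)
  rw [mem_annulus, v_eq_of_sub_lt this, hva]

lemma tball_mem_nhds (a : L) (m : ℤ) : tball a m ∈ nhds a := by
  rw [Valued.mem_nhds]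
  by_cases hex : ∃ z : L, z ≠ 0 ∧ Valued.v z ≤ oA m
  · obtain ⟨z, hz0, hz⟩ := hex
    have hr : Valued.v.restrict z ≠ 0 := by
      rw [Ne, Valuation.restrict_eq_zero_iff]; exact v_ne_zero_iff.mpr hz0
    refine ⟨Units.mk0 _ hr, ?_⟩
    intro y hy
    have hy' : Valued.v.restrict (y - a) < Valued.v.restrict z := hy
    have h2 : Valued.v (y - a) < Valued.v z := (Valuation.restrict_lt_iff _).mp hy'
    exact (h2.trans_le hz).le
  · push_neg at hex
    refine ⟨1, ?_⟩
    intro y hy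
    have hy' : Valued.v.restrict (y - a) < 1 := by simpa using hy
    have h1 : Valued.v (y - a) < 1 := (Valuation.restrict_lt_one_iff _).mp hy'
    show Valued.v (y - a) ≤ oA m
    by_cases hya : y - a = 0
    · rw [hya, map_zero]; exact zero_le'
    · exfalso
      obtain ⟨j, hj⟩ := v_exists hya
      have hp : ∀ k : ℕ, Valued.v ((y - a) ^ k) = oA (j * k) := by
        intro k
        induction k with
        | zero => simp [oA_zero]
        | succ k ih => rw [pow_succ, map_mul, ih, hj, oA_mul]; congr 1; push_cast; ring
      have hj0 : j < 0 := by rw [hj, ← oA_zero, oA_lt_oA] at h1; exact h1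
      have hlt := hex ((y - a) ^ (m.natAbs + 1)) (pow_ne_zero _ hya)
      rw [hp, oA_lt_oA] at hlt
      push_cast at hlt
      have hna : -(m.natAbs : ℤ) ≤ m := by omega
      nlinarith [abs_nonneg m, neg_abs_le m]

lemma isOpen_tball (a : L) (m : ℤ) : IsOpen (tball a m) := by
  rw [isOpen_iff_mem_nhds]
  intro x hx
  rw [tball_eq_of_mem hx]
  exact tball_mem_nhds x m

lemma isOpen_cball (j : ℤ) : IsOpen (cball L j) := by
  have : cball L j = tball (0:L) j := by ext x; simp [cball, tball]
  rw [this]; exact isOpen_tball 0 j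

lemma isClosed_tball (a : L) (m : ℤ) : IsClosed (tball a m) := by
  rw [← isOpen_compl_iff, isOpen_iff_mem_nhds]
  intro x hx
  simp only [Set.mem_compl_iff, tball, Set.mem_setOf_eq, not_le] at hx
  have h0 : Valued.v (x - a) ≠ 0 := fun h => by simp [h] at hx
  filter_upwards [tball_mem_nhds x (-(valInt (x - a)) - 1)] with y hy
  simp only [Set.mem_compl_iff, tball, Set.mem_setOf_eq, not_le]
  have hvxa : Valued.v (x - a) = oA (-valInt (x - a)) := v_eq_oA (by
    intro h; exact h0 (by rw [h]; simp))
  have hlt : Valued.v (x - y) < Valued.v (x - a) := by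
    rw [Valuation.map_sub_swap Valued.v x y, hvxa]
    exact lt_of_le_of_lt hy (oA_lt_oA.mpr (by omega))
  have : Valued.v (y - a) = Valued.v (x - a) := by
    have := v_eq_of_sub_lt (x := x - a) (y := y - a)
      (by rw [sub_sub_sub_cancel_right]; exact hlt)
    exact this
  rw [this]; exact hx

lemma isClosed_cball (j : ℤ) : IsClosed (cball L j) := by
  have : cball L j = tball (0:L) j := by ext x; simp [cball, tball]
  rw [this]; exact isClosed_tball 0 j

lemma isOpen_annulus (n : ℤ) : IsOpen (annulus L n) := by
  rw [isOpen_iff_mem_nhds]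
  intro x hx
  have hsub : tball x (-n - 1) ⊆ annulus L n := by
    intro y hy
    have : Valued.v (x - y) < Valued.v x := by
      rw [Valuation.map_sub_swap Valued.v x y, mem_annulus.mp hx]
      exact lt_of_le_of_lt hy (oA_lt_oA.mpr (by omega))
    rw [mem_annulus, v_eq_of_sub_lt this, mem_annulus.mp hx]
  exact Filter.mem_of_superset (tball_mem_nhds x (-n-1)) hsub

lemma isClosed_annulus (n : ℤ) : IsClosed (annulus L n) := by
  have : annulus L n = cball L (-n) \ cball L (-n - 1) := by
    ext x
    simp only [mem_annulus, cball, Set.mem_diff, Set.mem_setOf_eq]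
    constructor
    · intro h; rw [h]; exact ⟨le_refl _, by rw [not_le, oA_lt_oA]; omega⟩
    · rintro ⟨h1, h2⟩
      rcases lt_or_eq_of_le h1 with h | h
      · exact absurd (lt_oA_iff.mp h) h2
      · exact h
  rw [this]
  exact (isClosed_cball (-n)).sdiff (isOpen_cball _)

lemma annulus_subset_cball (n : ℤ) : annulus L n ⊆ cball L (-n) :=
  fun _ hx => le_of_eq (mem_annulus.mp hx)

/-- continuity of a locally constant function -/
lemma continuous_of_locConst {f : L → ℂ} {m : ℤ}
    (hf : ∀ x y : L, Valued.v (x - y) ≤ oA m → f x = f y) : Continuous f := by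
  rw [continuous_iff_continuousAt]
  intro x
  have hev : ∀ᶠ y in nhds x, f y = f x := by
    filter_upwards [tball_mem_nhds x m] with y hy
    exact hf y x hy
  exact Filter.Tendsto.congr'
    (by filter_upwards [hev] with y hy using hy.symm) tendsto_const_nhds

section Uniformizer
variable (u : L) (hu : Valued.v u = ((ofAdd (-1 : ℤ) : Multiplicative ℤ) : ℤₘ₀))
include hu

lemma v_zpow (k : ℤ) : Valued.v (u ^ k) = oA (-k) := by
  have hu' : Valued.v u = oA (-1) := hu
  rw [map_zpow₀, hu']
  show ((ofAdd (-1:ℤ) : Multiplicative ℤ) : ℤₘ₀) ^ k = _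
  rw [← WithZero.coe_zpow]
  congr 1
  rw [← ofAdd_toAdd ((ofAdd (-1:ℤ))^k), toAdd_zpow]
  simp

lemma u_ne_zero : u ≠ 0 := by
  intro h
  have := hu
  rw [h, map_zero] at this
  exact (oA_ne_zero (-1)) this.symm

lemma annulus_nonempty (n : ℤ) : (annulus L n).Nonempty :=
  ⟨u ^ n, by rw [mem_annulus, v_zpow u hu]⟩

variable [LocallyCompactSpace L]

lemma isCompact_cball (j : ℤ) : IsCompact (cball L j) := by
  obtain ⟨K, hK, hKn⟩ := exists_compact_mem_nhds (0 : L)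
  obtain ⟨γ, hγ⟩ := Valued.mem_nhds_zero.mp hKn
  obtain ⟨z, hz⟩ := MonoidWithZeroHom.ValueGroup₀.restrict₀_surjective _ γ.1
  have hz' : Valued.v.restrict z = γ.1 := hz
  have hz0 : z ≠ 0 := by
    intro h; rw [h, map_zero] at hz'; exact γ.ne_zero hz'.symm
  obtain ⟨k0, hk0⟩ := v_exists hz0
  set j0 : ℤ := k0 - 1 with hj0
  have hlt : oA j0 < Valued.v z := by
    rw [hk0, oA_lt_oA]; omega
  have hsub : cball L j0 ⊆ K := fun x hx => hγ (by
    show Valued.v.restrict x < γ.1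
    rw [← hz']
    exact (Valuation.restrict_lt_iff _).mpr (lt_of_le_of_lt hx hlt))
  have hK0 : IsCompact (cball L j0) :=
    hK.of_isClosed_subset (isClosed_cball j0) hsub
  have hu0 : u ≠ 0 := u_ne_zero u hu
  have himg : cball L j = (fun x => u ^ (j0 - j) * x) '' cball L j0 := by
    ext y
    constructor
    · intro hy
      refine ⟨u ^ (j - j0) * y, ?_, ?_⟩
      · show Valued.v (u ^ (j - j0) * y) ≤ oA j0
        rw [map_mul, v_zpow u hu]
        calc oA (-(j - j0)) * Valued.v y ≤ oA (-(j - j0)) * oA j :=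
              mul_le_mul_right hy _
          _ = oA j0 := by rw [oA_mul]; congr 1; omega
      · show u ^ (j0 - j) * (u ^ (j - j0) * y) = y
        rw [← mul_assoc, ← zpow_add₀ hu0]
        norm_num
    · rintro ⟨x, hx, rfl⟩
      show Valued.v (u ^ (j0 - j) * x) ≤ oA j
      rw [map_mul, v_zpow u hu]
      calc oA (-(j0 - j)) * Valued.v x ≤ oA (-(j0 - j)) * oA j0 :=
            mul_le_mul_right hx _
        _ = oA j := by rw [oA_mul]; congr 1; omega
  rw [himg]
  exact hK0.image (continuous_mul_left _)

lemma isCompact_tball (a : L) (m : ℤ) : IsCompact (tball a m) := by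
  have himg : tball a m = (fun x => a + x) '' cball L m := by
    ext y
    constructor
    · intro hy
      exact ⟨y - a, hy, by ring⟩
    · rintro ⟨x, hx, rfl⟩
      show Valued.v (a + x - a) ≤ oA m
      simpa [cball] using hx
  rw [himg]
  exact (isCompact_cball u hu m).image (continuous_add_left _)

lemma isCompact_annulus (n : ℤ) : IsCompact (annulus L n) :=
  (isCompact_cball u hu (-n)).of_isClosed_subset (isClosed_annulus n)
    (annulus_subset_cball n)

section Meas
variable [MeasurableSpace L] [BorelSpace L] [LocallyCompactSpace L]
  (μ : Measure L) [μ.IsAddHaarMeasure]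

lemma measure_annulus_ne_zero (n : ℤ) : μ (annulus L n) ≠ 0 :=
  (isOpen_annulus n).measure_ne_zero μ (annulus_nonempty u hu n)

lemma measure_annulus_ne_top (n : ℤ) : μ (annulus L n) ≠ ⊤ :=
  (isCompact_annulus u hu n).measure_lt_top.ne

lemma measure_annulus_toReal_ne (n : ℤ) : (μ (annulus L n)).toReal ≠ 0 :=
  ENNReal.toReal_ne_zero.mpr ⟨measure_annulus_ne_zero u hu μ n, measure_annulus_ne_top u hu μ n⟩

lemma measure_tball_toReal_ne (a : L) (m : ℤ) : (μ (tball a m)).toReal ≠ 0 :=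
  ENNReal.toReal_ne_zero.mpr
    ⟨(isOpen_tball a m).measure_ne_zero μ ⟨a, mem_tball_self a m⟩,
      (isCompact_tball u hu a m).measure_lt_top.ne⟩

omit hu in
lemma measure_tball_eq (a b : L) (m : ℤ) : μ (tball a m) = μ (tball b m) := by
  have key : ∀ z : L, tball z m = (fun x => -z + x) ⁻¹' (cball L m) := by
    intro z; ext x
    show Valued.v (x - z) ≤ oA m ↔ Valued.v (-z + x) ≤ oA m
    rw [neg_add_eq_sub]
  rw [key a, key b, measure_preimage_add, measure_preimage_add]

lemma jmap_const (g : L → ℂ) (c : ℂ) (n : ℤ)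
    (hg : ∀ x ∈ annulus L n, g x = c) : jmap L μ g n = c := by
  unfold jmap
  rw [setIntegral_congr_fun (isOpen_annulus n).measurableSet hg, setIntegral_const, smul_smul,
    measureReal_def, inv_mul_cancel₀ (measure_annulus_toReal_ne u hu μ n), one_smul]

lemma integral_annulus_eq_zero {g : L → ℂ} {n : ℤ} (h : jmap L μ g n = 0) :
    ∫ x in annulus L n, g x ∂μ = 0 := by
  unfold jmap at h
  rcases smul_eq_zero.mp h with h1 | h1
  · exact absurd h1 (inv_ne_zero (measure_annulus_toReal_ne u hu μ n))
  · exact h1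

end Meas
end Uniformizer

lemma ind_mem_DL {a : L} {n m : ℤ} (ha : a ∈ annulus L n) (c : ℂ) :
    Set.indicator (tball a m) (fun _ => c) ∈ DL L := by
  constructor
  · refine ⟨max m (-n), fun x hx => ?_⟩
    have hx' : x ∈ tball a m := by
      by_contra h
      rw [Set.indicator_of_notMem h] at hx; exact hx rfl
    have h1 : Valued.v x ≤ max (Valued.v (x - a)) (Valued.v a) := by
      have h2 := v_sub_le (x := x - a) (y := -a)
      rw [sub_neg_eq_add, sub_add_cancel] at h2
      rwa [Valuation.map_neg] at h2
    show Valued.v x ≤ oA (max m (-n))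
    calc Valued.v x ≤ max (Valued.v (x - a)) (Valued.v a) := h1
      _ ≤ max (oA m) (oA (-n)) := max_le_max hx' (le_of_eq (mem_annulus.mp ha))
      _ = oA (max m (-n)) := max_oA _ _
  · refine ⟨m, fun x y hxy => ?_⟩
    have hiff := mem_tball_congr (a := a) (m := m) hxy
    by_cases h : y ∈ tball a m
    · rw [Set.indicator_of_mem (hiff.mpr h), Set.indicator_of_mem h]
    · rw [Set.indicator_of_notMem (fun hx => h (hiff.mp hx)), Set.indicator_of_notMem h]

lemma ind_diff_mem_gen {a b : L} {n m : ℤ} (ha : a ∈ annulus L n) (hb : b ∈ annulus L n) :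
    (Set.indicator (tball a m) (fun _ => (1:ℂ)) - Set.indicator (tball b m) (fun _ => (1:ℂ))) ∈
      {p : L → ℂ | ∃ (h : L → ℂ) (r : L), h ∈ DL L ∧ Valued.v r = 1 ∧
        p = (fun x => h (r⁻¹ * x)) - h} := by
  have ha0 := annulus_ne_zero ha
  have hb0 := annulus_ne_zero hb
  refine ⟨Set.indicator (tball b m) (fun _ => (1:ℂ)), a / b, ind_mem_DL hb 1, ?_, ?_⟩
  · rw [map_div₀, mem_annulus.mp ha, mem_annulus.mp hb, div_self (oA_ne_zero _)]
  · have key : ∀ x : L, ((a / b)⁻¹ * x ∈ tball b m) ↔ (x ∈ tball a m) := by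
      intro x
      show Valued.v ((a/b)⁻¹ * x - b) ≤ oA m ↔ Valued.v (x - a) ≤ oA m
      have heq : (a/b)⁻¹ * x - b = (a/b)⁻¹ * (x - a) := by
        field_simp
      rw [heq, map_mul, map_inv₀, map_div₀, mem_annulus.mp ha, mem_annulus.mp hb,
        div_self (oA_ne_zero _), inv_one, one_mul]
    funext x
    simp only [Pi.sub_apply]
    congr 1
    by_cases h : x ∈ tball a m
    · rw [Set.indicator_of_mem h, Set.indicator_of_mem ((key x).mpr h)]
    · rw [Set.indicator_of_notMem h, Set.indicator_of_notMem (fun hh => h ((key x).mp hh))]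

lemma span_aux (u : L) (hu : Valued.v u = ((ofAdd (-1 : ℤ) : Multiplicative ℤ) : ℤₘ₀))
    [MeasurableSpace L] [BorelSpace L] [LocallyCompactSpace L]
    (μ : Measure L) [μ.IsAddHaarMeasure] (n m : ℤ) :
    ∀ (N : ℕ) (T : Finset L), T.card = N → (∀ t ∈ T, t ∈ annulus L n) →
    ∀ f : L → ℂ, (∀ x y : L, Valued.v (x - y) ≤ oA m → f x = f y) →
    (∀ x, f x ≠ 0 → ∃ t ∈ T, x ∈ tball t m) → (∫ x, f x ∂μ = 0) →
    f ∈ Submodule.span ℂ {p : L → ℂ | ∃ (h : L → ℂ) (r : L),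
      h ∈ DL L ∧ Valued.v r = 1 ∧ p = (fun x => h (r⁻¹ * x)) - h} := by
  classical
  intro N
  induction N with
  | zero =>
    intro T hT _ f _ hsupp _
    have hf0 : f = 0 := funext fun x => by
      by_contra hx
      obtain ⟨t, ht, _⟩ := hsupp x hx
      simp [Finset.card_eq_zero.mp hT] at ht
    rw [hf0]; exact Submodule.zero_mem _
  | succ N ih =>
    intro T hT hTann f hconst hsupp hint
    obtain ⟨t, ht⟩ : T.Nonempty := Finset.card_pos.mp (by omega)
    set c := f t with hc
    have hball : ∀ x ∈ tball t m, f x = c := fun x hx => hconst x t hx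
    have hfint : Integrable f μ := by
      apply (continuous_of_locConst hconst).integrable_of_hasCompactSupport
      apply HasCompactSupport.intro (T.isCompact_biUnion (fun s _ => isCompact_tball u hu s m))
      intro x hx
      by_contra hfx
      obtain ⟨s, hs, hxs⟩ := hsupp x hfx
      exact hx (Set.mem_biUnion hs hxs)
    rcases (T.erase t).eq_empty_or_nonempty with he | ⟨t', ht'⟩
    · -- single ball
      have hTt : ∀ s ∈ T, s = t := by
        intro s hs
        by_contra hst
        have : s ∈ T.erase t := Finset.mem_erase.mpr ⟨hst, hs⟩
        rw [he] at this
        simp at this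
      have hf : f = Set.indicator (tball t m) (fun _ => c) := by
        funext x
        by_cases hx : x ∈ tball t m
        · rw [Set.indicator_of_mem hx]; exact hball x hx
        · rw [Set.indicator_of_notMem hx]
          by_contra hfx
          obtain ⟨s, hs, hxs⟩ := hsupp x hfx
          rw [hTt s hs] at hxs
          exact hx hxs
      have hc0 : c = 0 := by
        have hi : ∫ x, f x ∂μ = (μ (tball t m)).toReal • c := by
          rw [hf]; exact integral_indicator_const c (isOpen_tball t m).measurableSet
        rw [hint] at hi
        rcases smul_eq_zero.mp hi.symm with h | h
        · exact absurd h (measure_tball_toReal_ne u hu μ t m)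
        · exact h
      rw [hf, hc0]
      have : Set.indicator (tball t m) (fun _ => (0:ℂ)) = 0 := Set.indicator_zero _ _
      rw [this]
      exact Submodule.zero_mem _
    · -- inductive step
      have htt' : t' ∈ T := (Finset.mem_erase.mp ht').2
      have htann := hTann t ht
      have ht'ann := hTann t' htt'
      set f' : L → ℂ :=
        f - Set.indicator (tball t m) (fun _ => c) + Set.indicator (tball t' m) (fun _ => c)
        with hf'
      have hconst' : ∀ x y : L, Valued.v (x - y) ≤ oA m → f' x = f' y := by
        intro x y hxy
        have h1 := hconst x y hxy
        have hifft := mem_tball_congr (a := t) (m := m) hxy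
        have hifft' := mem_tball_congr (a := t') (m := m) hxy
        simp only [hf', Pi.add_apply, Pi.sub_apply]
        rw [h1]
        congr 1
        · congr 1
          by_cases h : y ∈ tball t m
          · rw [Set.indicator_of_mem (hifft.mpr h), Set.indicator_of_mem h]
          · rw [Set.indicator_of_notMem (fun hh => h (hifft.mp hh)),
              Set.indicator_of_notMem h]
        · by_cases h : y ∈ tball t' m
          · rw [Set.indicator_of_mem (hifft'.mpr h), Set.indicator_of_mem h]
          · rw [Set.indicator_of_notMem (fun hh => h (hifft'.mp hh)),
              Set.indicator_of_notMem h]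
      have hsupp' : ∀ x, f' x ≠ 0 → ∃ s ∈ T.erase t, x ∈ tball s m := by
        intro x hx
        by_cases hxt' : x ∈ tball t' m
        · exact ⟨t', ht', hxt'⟩
        · by_cases hxt : x ∈ tball t m
          · exfalso
            apply hx
            simp only [hf', Pi.add_apply, Pi.sub_apply]
            rw [Set.indicator_of_mem hxt, Set.indicator_of_notMem hxt', hball x hxt]
            ring
          · have hfx : f x ≠ 0 := by
              intro h
              apply hx
              simp only [hf', Pi.add_apply, Pi.sub_apply]
              rw [Set.indicator_of_notMem hxt, Set.indicator_of_notMem hxt', h]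
              ring
            obtain ⟨s, hs, hxs⟩ := hsupp x hfx
            refine ⟨s, Finset.mem_erase.mpr ⟨?_, hs⟩, hxs⟩
            intro hst; rw [hst] at hxs; exact hxt hxs
      have hi1 : Integrable (Set.indicator (tball t m) (fun _ => c)) μ := by
        rw [integrable_indicator_iff (isOpen_tball t m).measurableSet]
        exact integrableOn_const (isCompact_tball u hu t m).measure_lt_top.ne
      have hi2 : Integrable (Set.indicator (tball t' m) (fun _ => c)) μ := by
        rw [integrable_indicator_iff (isOpen_tball t' m).measurableSet]
        exact integrableOn_const (isCompact_tball u hu t' m).measure_lt_top.ne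
      have hint' : ∫ x, f' x ∂μ = 0 := by
        simp only [hf', Pi.add_apply, Pi.sub_apply]
        have e2 : ∫ x, (f x - (tball t m).indicator (fun _ => c) x) +
              (tball t' m).indicator (fun _ => c) x ∂μ
            = (∫ x, (f x - (tball t m).indicator (fun _ => c) x) ∂μ) +
              ∫ x, (tball t' m).indicator (fun _ => c) x ∂μ :=
          integral_add (hfint.sub hi1) hi2
        have e1 : ∫ x, (f x - (tball t m).indicator (fun _ => c) x) ∂μ
            = (∫ x, f x ∂μ) - ∫ x, (tball t m).indicator (fun _ => c) x ∂μ :=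
          integral_sub hfint hi1
        rw [e2, e1, integral_indicator_const c (isOpen_tball t m).measurableSet,
          integral_indicator_const c (isOpen_tball t' m).measurableSet, hint,
          measureReal_def, measureReal_def, measure_tball_eq μ t t' m]
        ring
      have hf'mem := ih (T.erase t)
        (by rw [Finset.card_erase_of_mem ht, hT]; rfl)
        (fun s hs => hTann s (Finset.mem_erase.mp hs).2) f' hconst' hsupp' hint'
      have hgen : (Set.indicator (tball t m) (fun _ => (1:ℂ)) -
          Set.indicator (tball t' m) (fun _ => (1:ℂ))) ∈
          Submodule.span ℂ {p : L → ℂ | ∃ (h : L → ℂ) (r : L),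
            h ∈ DL L ∧ Valued.v r = 1 ∧ p = (fun x => h (r⁻¹ * x)) - h} :=
        Submodule.subset_span (ind_diff_mem_gen htann ht'ann)
      have hdec : f = f' + c • (Set.indicator (tball t m) (fun _ => (1:ℂ)) -
          Set.indicator (tball t' m) (fun _ => (1:ℂ))) := by
        funext x
        simp only [hf', Pi.add_apply, Pi.sub_apply, Pi.smul_apply, smul_eq_mul]
        by_cases h1 : x ∈ tball t m <;> by_cases h2 : x ∈ tball t' m <;>
          simp only [Set.indicator_of_mem, Set.indicator_of_notMem, h1, h2,
            not_false_iff] <;> ring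
      rw [hdec]
      exact Submodule.add_mem _ hf'mem (Submodule.smul_mem _ c hgen)

end Field

theorem coinvariants_iso_Dplus
    (L : Type*) [Field L] [Valued L ℤₘ₀] [CompleteSpace L]
    [Finite (IsLocalRing.ResidueField (Valued.v.valuationSubring : ValuationSubring L))]
    [MeasurableSpace L] [BorelSpace L] [LocallyCompactSpace L]
    (u : L) (hu : Valued.v u = ((ofAdd (-1 : ℤ) : Multiplicative ℤ) : ℤₘ₀))
    (μ : Measure L) [μ.IsAddHaarMeasure] [μ.Regular] (hμ : μ ≠ 0) :
    (∀ g ∈ DL L, jmap L μ g ∈ DplusSet) ∧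
      (∀ g ∈ DL L, ∀ r : L, Valued.v r = 1 →
        jmap L μ (fun x => g (r⁻¹ * x)) = jmap L μ g) ∧
      (∀ c ∈ DplusSet, ∃ g ∈ DL L, jmap L μ g = c) ∧
      (∀ g ∈ DL L, jmap L μ g = 0 →
        g ∈ Submodule.span ℂ {p : L → ℂ | ∃ (h : L → ℂ) (r : L),
          h ∈ DL L ∧ Valued.v r = 1 ∧ p = (fun x => h (r⁻¹ * x)) - h}) ∧
      (∀ μ' : Measure L, μ'.IsAddHaarMeasure → μ'.Regular →
        ∀ g ∈ DL L, jmap L μ' g = jmap L μ g) := by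
  classical
  refine ⟨?_, ?_, ?_, ?_, ?_⟩
  · -- (1) lands in D_+(ℤ)
    intro g hg
    obtain ⟨⟨n₀, hn₀⟩, ⟨m, hm⟩⟩ := hg
    constructor
    · refine ⟨-n₀ - 1, fun y hy => ?_⟩
      apply jmap_const u hu μ g 0 y
      intro x hx
      by_contra hgx
      have h1 : Valued.v x ≤ oA n₀ := hn₀ x hgx
      rw [mem_annulus.mp hx] at h1
      have := oA_le_oA.mp h1
      omega
    · refine ⟨-m, fun x hx => ?_⟩
      have hval : ∀ k : ℤ, -m ≤ k → jmap L μ g k = g 0 := by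
        intro k hk
        apply jmap_const u hu μ g (g 0) k
        intro z hz
        apply hm z 0
        show Valued.v (z - 0) ≤ oA m
        rw [sub_zero, mem_annulus.mp hz]
        exact oA_le_oA.mpr (by omega)
      rw [hval x hx, hval (x+1) (by omega)]
  · -- (2) invariance under units
    intro g hg r hr
    obtain ⟨_, ⟨m, hm⟩⟩ := hg
    have hr0 : r ≠ 0 := by
      intro h; rw [h, map_zero] at hr; exact zero_ne_one hr
    have hφcont : Continuous (fun x : L => r * x) := continuous_mul_left r
    have hφmeas : Measurable (fun x : L => r * x) := hφcont.measurable
    set ν := Measure.map (fun x : L => r * x) μ with hν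
    let e : L ≃+ L :=
      { toFun := fun x => r * x
        invFun := fun x => r⁻¹ * x
        left_inv := fun x => by field_simp
        right_inv := fun x => by field_simp
        map_add' := mul_add r }
    haveI hνHaar : ν.IsAddHaarMeasure :=
      e.isAddHaarMeasure_map μ hφcont (by
        show Continuous fun x : L => r⁻¹ * x
        exact continuous_mul_left _)
    haveI hνReg : ν.Regular := by
      have hcoe : ν = Measure.map (Homeomorph.mulLeft₀ r hr0) μ := by
        rw [hν, Homeomorph.coe_mulLeft₀]
      rw [hcoe]
      exact Measure.Regular.map (Homeomorph.mulLeft₀ r hr0)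
    have hpre : ∀ n : ℤ, (fun x : L => r * x) ⁻¹' (annulus L n) = annulus L n := by
      intro n; ext x
      simp only [Set.mem_preimage, mem_annulus, map_mul, hr, one_mul]
    have hsc := Measure.isAddLeftInvariant_eq_smul_of_regular ν μ
    set c := Measure.addHaarScalarFactor ν μ with hcdef
    have hν1 : ν = μ := by
      have h1 : (c • μ) (annulus L 0) = μ (annulus L 0) := by
        rw [← hsc, hν, Measure.map_apply hφmeas (isOpen_annulus (0:ℤ)).measurableSet, hpre 0]
      rw [Measure.smul_apply, ENNReal.smul_def, smul_eq_mul] at h1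
      have h2 := congrArg ENNReal.toReal h1
      rw [ENNReal.toReal_mul, ENNReal.coe_toReal] at h2
      have hc1 : c = 1 := by
        have h3 := mul_right_cancel₀ (measure_annulus_toReal_ne u hu μ 0)
          (h2.trans (one_mul _).symm)
        exact NNReal.coe_injective (by simpa using h3)
      rw [hsc, hc1, one_smul]
    funext n
    unfold jmap
    congr 1
    have hASM : AEStronglyMeasurable (fun y => g (r⁻¹ * y)) ν :=
      ((continuous_of_locConst (m := m) hm).comp (continuous_mul_left r⁻¹)).aestronglyMeasurable
    calc ∫ x in annulus L n, g (r⁻¹ * x) ∂μ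
        = ∫ x in annulus L n, g (r⁻¹ * x) ∂ν := by rw [hν1]
      _ = ∫ x in (fun x : L => r * x) ⁻¹' (annulus L n), g (r⁻¹ * (r * x)) ∂μ :=
          setIntegral_map (isOpen_annulus n).measurableSet hASM hφmeas.aemeasurable
      _ = ∫ x in annulus L n, g x ∂μ := by
          rw [hpre n]
          apply setIntegral_congr_fun (isOpen_annulus n).measurableSet
          intro x _
          show g (r⁻¹ * (r * x)) = g x
          rw [inv_mul_cancel_left₀ hr0]
  · -- (3) surjectivity
    intro c hc
    obtain ⟨⟨x0, hx0⟩, ⟨x1, hx1⟩⟩ := hc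
    have hc1 : ∀ k, x1 ≤ k → c k = c x1 := by
      intro k hk
      exact Int.le_induction (motive := fun k _ => c k = c x1) rfl
        (fun n hn ih => (hx1 n hn).trans ih) k hk
    set g : L → ℂ := fun x => if x = 0 then c x1 else c (valInt x) with hgdef
    have hgann : ∀ k : ℤ, ∀ x ∈ annulus L k, g x = c k := by
      intro k x hx
      simp only [hgdef, if_neg (annulus_ne_zero hx), valInt_annulus hx]
    have hgsmall : ∀ x : L, Valued.v x ≤ oA (-x1 - 1) → g x = c x1 := by
      intro x hx
      by_cases h : x = 0
      · simp [hgdef, h]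
      · have hv := v_eq_oA h
        rw [hv] at hx
        have := oA_le_oA.mp hx
        simp only [hgdef, if_neg h]
        exact hc1 _ (by omega)
    refine ⟨g, ⟨⟨-x0 - 1, ?_⟩, ⟨-x1 - 1, ?_⟩⟩, ?_⟩
    · intro x hgx
      by_cases h : x = 0
      · rw [h, map_zero]; exact zero_le'
      · have hv := v_eq_oA h
        show Valued.v x ≤ oA (-x0 - 1)
        rw [hv, oA_le_oA]
        simp only [hgdef, if_neg h] at hgx
        by_contra hcon
        exact hgx (hx0 (valInt x) (by omega))
    · intro x y hxy
      have hxy' : Valued.v (x - y) ≤ oA (-x1 - 1) := hxy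
      by_cases hx : Valued.v x ≤ oA (-x1 - 1)
      · have hy : Valued.v y ≤ oA (-x1 - 1) := by
          have h2 := v_sub_le (x := x) (y := x - y)
          rw [sub_sub_cancel] at h2
          exact h2.trans (max_le hx hxy')
        rw [hgsmall x hx, hgsmall y hy]
      · push_neg at hx
        have hlt : Valued.v (x - y) < Valued.v x := lt_of_le_of_lt hxy' hx
        have hv : Valued.v y = Valued.v x := v_eq_of_sub_lt hlt
        have hx0' : x ≠ 0 := by
          intro h; rw [h, map_zero] at hx; exact absurd hx (not_lt.mpr zero_le')
        have hy0' : y ≠ 0 := by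
          intro h; rw [h, map_zero] at hv; exact hx0' (v_zero_iff.mp hv.symm)
        simp only [hgdef, if_neg hx0', if_neg hy0']
        congr 1
        have h1 := v_eq_oA hx0'
        have := valInt_eq (x := y) (k := -valInt x) (by rw [hv, h1])
        omega
    · funext k
      exact jmap_const u hu μ g (c k) k (hgann k)
  · -- (4) kernel
    intro g hg hjz
    obtain ⟨⟨n₀, hn₀⟩, ⟨m, hm⟩⟩ := hg
    have hm' : ∀ x y : L, Valued.v (x - y) ≤ oA m → g x = g y := hm
    have hg0 : g 0 = 0 := by
      have h1 : jmap L μ g (-m) = g 0 := by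
        apply jmap_const u hu μ g (g 0) (-m)
        intro x hx
        apply hm' x 0
        rw [sub_zero, mem_annulus.mp hx]
        exact oA_le_oA.mpr (by omega)
      rw [hjz] at h1
      exact h1.symm
    set I : Finset ℤ := Finset.Icc (-n₀) (-m-1) with hI
    have hdecomp : g = ∑ k ∈ I, Set.indicator (annulus L k) g := by
      funext x
      rw [Finset.sum_apply]
      by_cases hx : g x = 0
      · rw [hx]
        symm
        apply Finset.sum_eq_zero
        intro k _
        by_cases hxk : x ∈ annulus L k
        · rw [Set.indicator_of_mem hxk]; exact hx
        · exact Set.indicator_of_notMem hxk _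
      · have hx0 : x ≠ 0 := fun h => hx (h ▸ hg0)
        have hxv := v_eq_oA hx0
        have hk0mem : x ∈ annulus L (valInt x) := by
          rw [mem_annulus]; exact hxv
        have hk0I : valInt x ∈ I := by
          rw [hI, Finset.mem_Icc]
          constructor
          · have h1 : Valued.v x ≤ oA n₀ := hn₀ x hx
            rw [hxv] at h1
            have := oA_le_oA.mp h1
            omega
          · by_contra hcon
            push_neg at hcon
            apply hx
            rw [hm' x 0 (by rw [sub_zero, hxv]; exact oA_le_oA.mpr (by omega)), hg0]
        symm
        rw [Finset.sum_eq_single (valInt x)]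
        · exact Set.indicator_of_mem hk0mem g
        · intro k _ hkk
          apply Set.indicator_of_notMem
          intro hxk
          exact hkk ((valInt_annulus hxk).symm ▸ rfl)
        · intro h; exact absurd hk0I h
    rw [hdecomp]
    apply Submodule.sum_mem
    intro k hkI
    have hkm : m < -k := by rw [hI, Finset.mem_Icc] at hkI; omega
    obtain ⟨T0, hT0⟩ := (isCompact_annulus u hu k).elim_finite_subcover
      (fun t : annulus L k => tball (t : L) m) (fun t => isOpen_tball _ m)
      (fun x hx => Set.mem_iUnion.mpr ⟨⟨x, hx⟩, mem_tball_self x m⟩)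
    set T : Finset L := T0.image Subtype.val with hT
    apply span_aux u hu μ k m T.card T rfl
    · intro t htT
      obtain ⟨t0, _, rfl⟩ := Finset.mem_image.mp htT
      exact t0.2
    · intro x y hxy
      have hgxy := hm' x y hxy
      have hiff : x ∈ annulus L k ↔ y ∈ annulus L k := by
        constructor <;> intro h
        · rw [mem_annulus, v_eq_of_sub_lt (x := x) (y := y)
            (by rw [mem_annulus.mp h]; exact lt_of_le_of_lt hxy (oA_lt_oA.mpr hkm))]
          exact mem_annulus.mp h
        · rw [mem_annulus, v_eq_of_sub_lt (x := y) (y := x)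
            (by rw [Valuation.map_sub_swap Valued.v y x, mem_annulus.mp h]
                exact lt_of_le_of_lt hxy (oA_lt_oA.mpr hkm))]
          exact mem_annulus.mp h
      by_cases h : y ∈ annulus L k
      · rw [Set.indicator_of_mem (hiff.mpr h), Set.indicator_of_mem h]
        exact hgxy
      · rw [Set.indicator_of_notMem (fun hh => h (hiff.mp hh)), Set.indicator_of_notMem h]
    · intro x hx
      have hxa : x ∈ annulus L k := by
        by_contra h
        rw [Set.indicator_of_notMem h] at hx
        exact hx rfl
      obtain ⟨t0, ht0, hxt⟩ := Set.mem_iUnion₂.mp (hT0 hxa)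
      exact ⟨(t0 : L), Finset.mem_image_of_mem _ ht0, hxt⟩
    · rw [integral_indicator (isOpen_annulus k).measurableSet]
      exact integral_annulus_eq_zero u hu μ (congrFun hjz k)
  · -- (5) independence of μ
    intro μ' hμ'H hμ'R g hg
    haveI := hμ'H
    haveI := hμ'R
    have hsc := Measure.isAddLeftInvariant_eq_smul_of_regular μ' μ
    set c := Measure.addHaarScalarFactor μ' μ with hcdef
    have hcpos : (0:ℝ) < c.toReal := by
      have := Measure.addHaarScalarFactor_pos_of_isAddHaarMeasure μ' μ
      exact_mod_cast this
    funext n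
    unfold jmap
    have hsc' : μ' = (c : ℝ≥0∞) • μ := by rw [hsc, ENNReal.smul_def]
    have hcne : (c : ℝ) ≠ 0 := ne_of_gt hcpos
    have htne := measure_annulus_toReal_ne u hu μ n
    rw [hsc', Measure.restrict_smul, integral_smul_measure, Measure.smul_apply,
      smul_eq_mul, ENNReal.toReal_mul, ENNReal.coe_toReal, smul_smul]
    congr 1
    field_simp
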